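/- arXiv:2601.17825 — 4 statements merged into one kernel-verified Lean document; each statement's English description precedes it below -/
import Mathlib

section
/- Let λ > 0 and D_min > 0 be real numbers, let a, b ∈ ℝ with b ≠ 0, and let N ≥ 2 be an integer. Then there exist real numbers x_1 < x_2 < ⋯ < x_N with x_{n} − x_{n−1} ≥ D_min for all n = 2,…,N such that ∑_{n=1}^{N} exp( i·(2π/λ)·(a·x_n + b·x_n²) ) = 0. -/
open Complex Real Filter

/-- key phase-hitting lemma -/
lemma phase_hit (c b a : ℝ) (hcb : c * b ≠ 0) (θ s : ℝ) :
    ∃ x : ℝ, s ≤ x ∧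
      Complex.exp (Complex.I * ((c * (a * x + b * x ^ 2)) : ℝ)) =
      Complex.exp (Complex.I * (θ : ℝ)) := by
  set f : ℝ → ℝ := fun x => c * (a * x + b * x ^ 2) with hf
  have hcont : Continuous f := by fun_prop
  have hfeq : ∀ x : ℝ, f x = x * (c * b * x + c * a) := by intro x; simp [hf]; ring
  rcases lt_or_gt_of_ne hcb with hneg | hpos
  · -- f → atBot
    have htend : Tendsto f atTop atBot := by
      have : Tendsto (fun x : ℝ => c * b * x + c * a) atTop atBot :=
        Filter.tendsto_atBot_add_const_right _ _ ((tendsto_const_mul_atBot_of_neg hneg).2 tendsto_id)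
      have := tendsto_id.atTop_mul_atBot₀ this
      simpa [hfeq] using this.congr fun x => (hfeq x).symm
    set k : ℤ := ⌊(f s - θ) / (2 * π)⌋ with hk
    set t : ℝ := θ + 2 * π * k with ht
    have hts : t ≤ f s := by
      have h2pi : (0:ℝ) < 2 * π := by positivity
      have := Int.floor_le ((f s - θ) / (2 * π))
      rw [ht]
      nlinarith [(mul_le_mul_of_nonneg_left this (le_of_lt h2pi)), mul_div_cancel₀ (f s - θ) (ne_of_gt h2pi)]
    obtain ⟨Z, hZ⟩ := ((htend.eventually (eventually_le_atBot t)).and (eventually_ge_atTop s)).exists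
    have hsub := intermediate_value_Icc' hZ.2 hcont.continuousOn (a := s) (b := Z)
    have : t ∈ Set.Icc (f Z) (f s) := ⟨hZ.1, hts⟩
    obtain ⟨x, hx, hfx⟩ := hsub this
    refine ⟨x, hx.1, ?_⟩
    rw [show c * (a * x + b * x ^ 2) = t from hfx, ht]
    push_cast
    rw [mul_add, Complex.exp_add]
    have : Complex.I * (2 * ↑π * ↑k) = ↑k * (2 * ↑π * Complex.I) := by ring
    rw [this, Complex.exp_int_mul_two_pi_mul_I, mul_one]
  · have htend : Tendsto f atTop atTop := by
      have : Tendsto (fun x : ℝ => c * b * x + c * a) atTop atTop :=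
        Filter.tendsto_atTop_add_const_right _ _ ((tendsto_const_mul_atTop_of_pos hpos).2 tendsto_id)
      exact (tendsto_id.atTop_mul_atTop₀ this).congr fun x => (hfeq x).symm
    set k : ℤ := ⌈(f s - θ) / (2 * π)⌉ with hk
    set t : ℝ := θ + 2 * π * k with ht
    have hts : f s ≤ t := by
      have h2pi : (0:ℝ) < 2 * π := by positivity
      have := Int.le_ceil ((f s - θ) / (2 * π))
      rw [ht]
      nlinarith [(mul_le_mul_of_nonneg_left this (le_of_lt h2pi)), mul_div_cancel₀ (f s - θ) (ne_of_gt h2pi)]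
    obtain ⟨Z, hZ⟩ := ((htend.eventually (eventually_ge_atTop t)).and (eventually_ge_atTop s)).exists
    have hsub := intermediate_value_Icc hZ.2 hcont.continuousOn (a := s) (b := Z)
    have : t ∈ Set.Icc (f s) (f Z) := ⟨hts, hZ.1⟩
    obtain ⟨x, hx, hfx⟩ := hsub this
    refine ⟨x, hx.1, ?_⟩
    rw [show c * (a * x + b * x ^ 2) = t from hfx, ht]
    push_cast
    rw [mul_add, Complex.exp_add]
    have : Complex.I * (2 * ↑π * ↑k) = ↑k * (2 * ↑π * Complex.I) := by ring
    rw [this, Complex.exp_int_mul_two_pi_mul_I, mul_one]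


/-- Proposition 1: beam nulling with K = 1 undesired user under the ALMR assumption.
For any `λ > 0`, `D_min > 0`, real `a, b` with `b ≠ 0`, and integer `N ≥ 2`, there exist
antenna positions `x_1 < x_2 < ⋯ < x_N` with consecutive gaps at least `D_min` such that
`∑_{n=1}^N exp(i (2π/λ)(a x_n + b x_n²)) = 0`. -/
theorem beam_nulling_single_user
    (lam Dmin : ℝ) (hlam : 0 < lam) (hDmin : 0 < Dmin)
    (a b : ℝ) (hb : b ≠ 0) (N : ℕ) (hN : 2 ≤ N) :
    ∃ x : Fin N → ℝ,
      StrictMono x ∧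
      (∀ i : Fin N, ∀ h : i.val + 1 < N, x ⟨i.val + 1, h⟩ - x i ≥ Dmin) ∧
      ∑ n : Fin N,
        Complex.exp (Complex.I * ((2 * Real.pi / lam) * (a * x n + b * (x n) ^ 2) : ℝ)) = 0 := by
  have hcb : (2 * Real.pi / lam) * b ≠ 0 :=
    mul_ne_zero (ne_of_gt (by positivity)) hb
  choose F hF1 hF2 using fun (n : ℕ) (s : ℝ) =>
    phase_hit (2 * Real.pi / lam) b a hcb (2 * Real.pi * n / N) s
  set xseq : ℕ → ℝ := fun n => Nat.rec (F 0 0) (fun k ih => F (k + 1) (ih + Dmin)) n with hxseq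
  have hstep : ∀ n : ℕ, xseq (n + 1) = F (n + 1) (xseq n + Dmin) := fun n => rfl
  have hgap : ∀ n : ℕ, xseq n + Dmin ≤ xseq (n + 1) := by
    intro n; rw [hstep]; exact hF1 (n + 1) (xseq n + Dmin)
  have hmono : StrictMono xseq :=
    strictMono_nat_of_lt_succ fun n => by have := hgap n; linarith
  have hexp : ∀ n : ℕ,
      Complex.exp (Complex.I * (((2 * Real.pi / lam) * (a * xseq n + b * (xseq n) ^ 2)) : ℝ)) =
      Complex.exp (Complex.I * ((2 * Real.pi * n / N : ℝ) : ℂ)) := by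
    intro n
    cases n with
    | zero => exact hF2 0 0
    | succ k => rw [hstep]; exact hF2 (k + 1) (xseq k + Dmin)
  refine ⟨fun i => xseq i.val, fun i j hij => hmono hij, ?_, ?_⟩
  · intro i h
    have := hgap i.val
    simpa using by linarith
  · have hN0 : N ≠ 0 := by omega
    have hprim := Complex.isPrimitiveRoot_exp N hN0
    have hζ : ∀ n : ℕ,
        Complex.exp (Complex.I * ((2 * Real.pi * n / N : ℝ) : ℂ)) =
        (Complex.exp (2 * Real.pi * Complex.I / N)) ^ n := by
      intro n
      rw [← Complex.exp_nat_mul]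
      congr 1
      push_cast
      ring
    calc ∑ n : Fin N,
          Complex.exp (Complex.I * (((2 * Real.pi / lam) * (a * xseq n.val + b * (xseq n.val) ^ 2)) : ℝ))
        = ∑ n : Fin N, (Complex.exp (2 * Real.pi * Complex.I / N)) ^ (n : ℕ) := by
          refine Finset.sum_congr rfl fun n _ => ?_
          rw [hexp n.val, hζ n.val]
      _ = ∑ i ∈ Finset.range N, (Complex.exp (2 * Real.pi * Complex.I / N)) ^ i :=
          Fin.sum_univ_eq_sum_range _ N
      _ = 0 := hprim.geom_sum_eq_zero (by omega)
end

section
/- Let λ > 0, let K_1 ≥ 0 and N_1 ≥ 1 be integers, and let b_1,…,b_{K_1+1} ∈ ℝ with b_{K_1+1} ≠ 0. Suppose x_1,…,x_{N_1} ∈ ℝ satisfy ∑_{n=1}^{N_1} exp( i·(2π/λ)·b_k·x_n² ) = 0 for every k = 1,…,K_1. Then for every integer N_2 ≥ 2 there exist real numbers y_1,…,y_{N_1·N_2} such that ∑_{n=1}^{N_1·N_2} exp( i·(2π/λ)·b_k·y_n² ) = 0 for every k = 1,…,K_1+1. -/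
open Complex Real

/-- Lemma 3: extension of a nulling antenna position vector. If `x_1,…,x_{N₁}` null the
exponential sums `∑_n exp(i (2π/λ) b_k x_n²)` for `k = 1,…,K₁`, and `b_{K₁+1} ≠ 0`,
then for any `N₂ ≥ 2` there exist `y_1,…,y_{N₁N₂}` nulling the sums for `k = 1,…,K₁+1`. -/
theorem nulling_extension
    (lam : ℝ) (hlam : 0 < lam) (K1 N1 : ℕ) (hN1 : 1 ≤ N1)
    (b : Fin (K1 + 1) → ℝ) (hb : b (Fin.last K1) ≠ 0)
    (x : Fin N1 → ℝ)
    (hx : ∀ k : Fin K1,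
      ∑ n : Fin N1,
        Complex.exp (Complex.I * ((2 * Real.pi / lam) * b k.castSucc * (x n) ^ 2 : ℝ)) = 0) :
    ∀ N2 : ℕ, 2 ≤ N2 →
      ∃ y : Fin (N1 * N2) → ℝ,
        ∀ k : Fin (K1 + 1),
          ∑ n : Fin (N1 * N2),
            Complex.exp (Complex.I * ((2 * Real.pi / lam) * b k * (y n) ^ 2 : ℝ)) = 0 := by
  intro N2 hN2
  have hN2pos : (0 : ℝ) < N2 := by positivity
  set B := b (Fin.last K1) with hBdef
  have hBabs : 0 < |B| := abs_pos.mpr hb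
  set d : ℝ := lam / (N2 * |B|) with hd
  have hd0 : 0 < d := div_pos hlam (mul_pos hN2pos hBabs)
  refine ⟨fun n => Real.sqrt ((x (finProdFinEquiv.symm n).1) ^ 2 +
      ((finProdFinEquiv.symm n).2 : ℝ) * d), ?_⟩
  intro k
  set c : ℝ := 2 * Real.pi / lam * b k with hc
  have hsum :
      ∑ n : Fin (N1 * N2),
        Complex.exp (Complex.I * ((c * (Real.sqrt ((x (finProdFinEquiv.symm n).1) ^ 2 +
            ((finProdFinEquiv.symm n).2 : ℝ) * d)) ^ 2 : ℝ)))
      = (∑ n1 : Fin N1, Complex.exp (Complex.I * ((c * (x n1) ^ 2 : ℝ)))) *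
        (∑ n2 : Fin N2, Complex.exp (Complex.I * ((c * d : ℝ))) ^ (n2 : ℕ)) := by
    rw [← Equiv.sum_comp finProdFinEquiv (fun n =>
      Complex.exp (Complex.I * ((c * (Real.sqrt ((x (finProdFinEquiv.symm n).1) ^ 2 +
            ((finProdFinEquiv.symm n).2 : ℝ) * d)) ^ 2 : ℝ))))]
    simp only [Equiv.symm_apply_apply]
    rw [Fintype.sum_prod_type, Finset.sum_mul_sum]
    refine Finset.sum_congr rfl fun n1 _ => Finset.sum_congr rfl fun n2 _ => ?_
    have hnn : (0:ℝ) ≤ (x n1) ^ 2 + (n2 : ℝ) * d := by positivity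
    rw [Real.sq_sqrt hnn]
    rw [← Complex.exp_nat_mul, ← Complex.exp_add]
    congr 1
    push_cast
    ring
  rcases eq_or_ne k (Fin.last K1) with hk | hk
  · -- last user: second factor vanishes
    have hcd : c * d = 2 * Real.pi * (B / |B|) / N2 := by
      subst hk
      rw [hc, hd, ← hBdef]
      field_simp
    set z : ℂ := Complex.exp (Complex.I * ((c * d : ℝ))) with hz
    have hsgn : B / |B| = 1 ∨ B / |B| = -1 := by
      rcases abs_choice B with h | h
      · left; rw [h]; field_simp
      · right; rw [h]; field_simp
    have hzN : z ^ N2 = 1 := by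
      obtain ⟨m, hm⟩ : ∃ m : ℤ, ((B / |B| : ℝ) : ℂ) = (m : ℂ) := by
        rcases hsgn with h | h
        · exact ⟨1, by rw [h]; norm_num⟩
        · exact ⟨-1, by rw [h]; push_cast; norm_num⟩
      rw [hz, ← Complex.exp_nat_mul]
      have hN2C : (N2 : ℂ) ≠ 0 := Nat.cast_ne_zero.mpr (by omega)
      have heq : (N2 : ℂ) * (Complex.I * ((c * d : ℝ))) = (m : ℂ) * (2 * Real.pi * Complex.I) := by
        rw [← hm, hcd]
        have habsC : ((|B| : ℝ) : ℂ) ≠ 0 := by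
          exact_mod_cast abs_ne_zero.mpr hb
        push_cast
        field_simp
      rw [heq, Complex.exp_int_mul_two_pi_mul_I]
    have hz1 : z ≠ 1 := by
      rw [hz, Ne, Complex.exp_eq_one_iff]
      rintro ⟨m, hm⟩
      have hre : (c * d : ℝ) = m * (2 * Real.pi) := by
        have h2 : ((c * d : ℝ) : ℂ) * Complex.I = ((m * (2 * Real.pi) : ℝ) : ℂ) * Complex.I := by
          rw [mul_comm, hm]; push_cast; ring
        have h3 := mul_right_cancel₀ Complex.I_ne_zero h2
        exact_mod_cast h3
      rw [hcd] at hre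
      have hπ : Real.pi ≠ 0 := Real.pi_ne_zero
      have hmeq : (m : ℝ) = (B / |B|) / N2 := by
        field_simp at hre
        field_simp
        nlinarith [Real.pi_pos, hre]
      have habs1 : _root_.abs (B / |B|) = 1 := by
        rcases hsgn with h | h <;> rw [h] <;> norm_num
      have habs : |(m : ℝ)| = 1 / N2 := by
        rw [hmeq, abs_div, habs1, abs_of_pos hN2pos]
      have hlt : |(m : ℝ)| < 1 := by
        rw [habs]
        rw [div_lt_one hN2pos]
        exact_mod_cast lt_of_lt_of_le one_lt_two hN2
      have hm0 : m = 0 := by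
        have h1 : |m| < 1 := by exact_mod_cast hlt
        rcases abs_lt.mp h1 with ⟨ha, hb2⟩
        omega
      rw [hm0] at habs
      simp at habs
      exact absurd habs.symm (ne_of_gt (by positivity))
    have hzero : ∑ n2 : Fin N2, z ^ (n2 : ℕ) = 0 := by
      rw [Fin.sum_univ_eq_sum_range (fun j => z ^ j), geom_sum_eq hz1, hzN]
      simp
    rw [hsum, hzero, mul_zero]
  · -- earlier users: first factor vanishes
    obtain ⟨j, hj⟩ := Fin.exists_castSucc_eq.mpr hk
    have hfirst : ∑ n1 : Fin N1, Complex.exp (Complex.I * ((c * (x n1) ^ 2 : ℝ))) = 0 := by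
      have := hx j
      rw [hc, ← hj]
      exact this
    rw [hsum, hfirst, zero_mul]
end

section
/- Let λ > 0, let K ≥ 1 be an integer, and let b_1,…,b_K ∈ ℝ with b_k ≠ 0 for every k. Suppose N = g_1·g_2·⋯·g_K where each g_i ≥ 2 is an integer. Then there exist real numbers x_1,…,x_N such that ∑_{n=1}^{N} exp( i·(2π/λ)·b_k·x_n² ) = 0 for every k = 1,…,K. -/
open Complex Real

lemma root_sum (m : ℕ) (hm : 2 ≤ m) :
    ∑ a : Fin m, Complex.exp (Complex.I * (2 * Real.pi / m * a)) = 0 := by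
  have hm0 : (m : ℂ) ≠ 0 := by
    exact Nat.cast_ne_zero.mpr (by omega)
  have h2πI : (2 * (Real.pi : ℂ) * Complex.I) ≠ 0 := by
    have hπ : (Real.pi : ℂ) ≠ 0 := by exact_mod_cast Real.pi_ne_zero
    simp [Complex.I_ne_zero, hπ]
  set z : ℂ := Complex.exp (Complex.I * (2 * Real.pi / m)) with hz
  have hzpow : ∀ a : ℕ, Complex.exp (Complex.I * (2 * Real.pi / m * a)) = z ^ a := by
    intro a
    rw [hz, ← Complex.exp_nat_mul]
    ring_nf
  have hz1 : z ≠ 1 := by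
    rw [hz]
    intro h
    rw [Complex.exp_eq_one_iff] at h
    obtain ⟨n, hn⟩ := h
    have h1 : (2 * (Real.pi : ℂ) * Complex.I) * (1 / m) = (2 * (Real.pi : ℂ) * Complex.I) * n := by
      field_simp
      linear_combination ((m:ℂ) * (2*(Real.pi:ℂ)*Complex.I)⁻¹) * hn - (1 - (m:ℂ) * n) * mul_inv_cancel₀ h2πI - ((2*(Real.pi:ℂ)*Complex.I) * (2*(Real.pi:ℂ)*Complex.I)⁻¹) * mul_inv_cancel₀ hm0
    have h2 : (1 : ℂ) / m = n := mul_left_cancel₀ h2πI h1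
    have h3 : ((n * m : ℤ) : ℂ) = 1 := by
      push_cast
      field_simp at h2
      exact (mul_comm _ _).trans h2.symm
    have h4 : (n * m : ℤ) = 1 := by exact_mod_cast h3
    have h5 : (m : ℤ) ∣ 1 := ⟨n, by linarith [h4]⟩
    have := Int.le_of_dvd one_pos h5
    omega
  have hzm : z ^ m = 1 := by
    rw [hz, ← Complex.exp_nat_mul, Complex.exp_eq_one_iff]
    refine ⟨1, ?_⟩
    field_simp
    ring
  calc ∑ a : Fin m, Complex.exp (Complex.I * (2 * Real.pi / m * a))
      = ∑ a ∈ Finset.range m, z ^ a := by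
        rw [← Fin.sum_univ_eq_sum_range (fun a : ℕ => z ^ a)]
        exact Finset.sum_congr rfl fun a _ => hzpow a
    _ = (z ^ m - 1) / (z - 1) := geom_sum_eq hz1 m
    _ = 0 := by rw [hzm]; simp

/-- Algorithm 1 construction: if `N = g₁ ⋯ g_K` with each `g_i ≥ 2`, and `b_1,…,b_K` are
nonzero reals, then there exist `x_1,…,x_N` with
`∑_{n=1}^N exp(i (2π/λ) b_k x_n²) = 0` for every `k = 1,…,K`. -/
theorem simultaneous_nulling_construction
    (lam : ℝ) (hlam : 0 < lam) (K : ℕ) (hK : 1 ≤ K)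
    (b : Fin K → ℝ) (hb : ∀ k, b k ≠ 0)
    (g : Fin K → ℕ) (hg : ∀ i, 2 ≤ g i)
    (N : ℕ) (hN : N = ∏ i, g i) :
    ∃ x : Fin N → ℝ,
      ∀ k : Fin K,
        ∑ n : Fin N,
          Complex.exp (Complex.I * ((2 * Real.pi / lam) * b k * (x n) ^ 2 : ℝ)) = 0 := by
  classical
  set c : Fin K → ℝ := fun i => lam / (g i * b i) with hc
  set C : ℝ := ∑ i, |c i| * g i with hC
  have hcard : Fintype.card (Fin N) = Fintype.card (∀ i, Fin (g i)) := by
    simp [hN]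
  let e : Fin N ≃ (∀ i, Fin (g i)) := Fintype.equivOfCardEq hcard
  set s : (∀ i, Fin (g i)) → ℝ := fun v => ∑ i, c i * (v i : ℝ) with hs
  have hnonneg : ∀ v : ∀ i, Fin (g i), 0 ≤ C + s v := by
    intro v
    have : C + s v = ∑ i, (|c i| * g i + c i * (v i : ℝ)) := by
      rw [hC, hs, ← Finset.sum_add_distrib]
    rw [this]
    apply Finset.sum_nonneg
    intro i _
    have hv : ((v i : ℕ) : ℝ) ≤ (g i : ℝ) := by
      exact_mod_cast (v i).isLt.le
    have habs : |c i * (v i : ℝ)| ≤ |c i| * g i := by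
      rw [abs_mul, Nat.abs_cast]
      exact mul_le_mul_of_nonneg_left hv (abs_nonneg _)
    nlinarith [neg_abs_le (c i * (v i : ℝ))]
  refine ⟨fun n => Real.sqrt (C + s (e n)), fun k => ?_⟩
  have hsq : ∀ n, (Real.sqrt (C + s (e n))) ^ 2 = C + s (e n) := fun n =>
    Real.sq_sqrt (hnonneg (e n))
  set θ : ℝ := 2 * Real.pi / lam * b k with hθ
  have hgk0 : (g k : ℝ) ≠ 0 := by
    have := hg k; positivity
  have hθc : θ * c k = 2 * Real.pi / g k := by
    rw [hθ, hc]
    field_simp [hb k, hgk0, hlam.ne']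
  calc ∑ n : Fin N, Complex.exp (Complex.I * (θ * (Real.sqrt (C + s (e n))) ^ 2 : ℝ))
      = ∑ n : Fin N, Complex.exp (Complex.I * ((θ * (C + s (e n)) : ℝ))) := by
        refine Finset.sum_congr rfl fun n _ => ?_
        rw [hsq n]
    _ = ∑ v : ∀ i, Fin (g i), Complex.exp (Complex.I * ((θ * (C + s v) : ℝ))) :=
        Fintype.sum_equiv e _ _ (fun n => rfl)
    _ = 0 := by
        rw [← Equiv.sum_comp (Equiv.piSplitAt k (fun i => Fin (g i))).symm
          (fun v => Complex.exp (Complex.I * ((θ * (C + s v) : ℝ))))]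
        rw [Fintype.sum_prod_type]
        -- now goal: ∑ a : Fin (g k), ∑ w, exp (...) = 0
        have hsplit : ∀ (a : Fin (g k)) (w : ∀ j : {j // j ≠ k}, Fin (g j)),
            s ((Equiv.piSplitAt k (fun i => Fin (g i))).symm (a, w))
              = c k * a + ∑ j : {j // j ≠ k}, c j * (w j : ℝ) := by
          intro a w
          simp only [hs]
          rw [← Finset.add_sum_erase _ _ (Finset.mem_univ k)]
          congr 1
          · simp [Equiv.piSplitAt_symm_apply]
          · rw [Finset.sum_subtype (p := fun j => j ≠ k) (Finset.univ.erase k)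
              (fun x => by simp)
              (fun j => c j * (((Equiv.piSplitAt k (fun i => Fin (g i))).symm (a, w)) j : ℝ))]
            refine Finset.sum_congr rfl fun j _ => ?_
            simp [Equiv.piSplitAt_symm_apply, j.2]
        calc ∑ a : Fin (g k), ∑ w : ∀ j : {j // j ≠ k}, Fin (g j),
                Complex.exp (Complex.I *
                  ((θ * (C + s ((Equiv.piSplitAt k (fun i => Fin (g i))).symm (a, w))) : ℝ)))
            = ∑ a : Fin (g k), ∑ w : ∀ j : {j // j ≠ k}, Fin (g j),
                Complex.exp (Complex.I * ((2 * Real.pi / (g k) * a : ℝ))) *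
                Complex.exp (Complex.I * ((θ * (C + ∑ j : {j // j ≠ k}, c j * (w j : ℝ)) : ℝ))) := by
              refine Finset.sum_congr rfl fun a _ => Finset.sum_congr rfl fun w _ => ?_
              rw [hsplit a w, ← Complex.exp_add]
              have hθcC : (θ:ℂ) * (c k : ℂ) = 2 * (Real.pi:ℂ) / (g k : ℂ) := by
                exact_mod_cast hθc
              congr 1
              push_cast
              linear_combination Complex.I * ((a:ℕ):ℂ) * hθcC
          _ = (∑ a : Fin (g k), Complex.exp (Complex.I * ((2 * Real.pi / (g k) * a : ℝ)))) *
              (∑ w : ∀ j : {j // j ≠ k}, Fin (g j),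
                Complex.exp (Complex.I * ((θ * (C + ∑ j : {j // j ≠ k}, c j * (w j : ℝ)) : ℝ)))) := by
              rw [Finset.sum_mul]
              exact Finset.sum_congr rfl fun a _ => (Finset.mul_sum _ _ _).symm
          _ = 0 := by
              have h0 : (∑ a : Fin (g k), Complex.exp (Complex.I * ((2 * Real.pi / (g k) * a : ℝ)))) = 0 := by
                have := root_sum (g k) (hg k)
                convert this using 2 with a
                push_cast
                ring
              rw [h0, zero_mul]
end

section
/- Let λ > 0, D_min > 0, and let N ≥ 1 and K ≥ 1 be integers. Let â_1,…,â_K and b̂_1,…,b̂_K be rational numbers. Then there exists a real number d ≥ D_min such that, with antenna positions x_n = (n−1)·d for n = 1,…,N, one has (1/N)·| ∑_{n=1}^{N} exp( i·2π·( (n−1)·â_k·d + (n−1)²·(b̂_k·d)² ) ) |² = N for every k = 1,…,K. -/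
open Complex Real

lemma rat_mul_nat_int (q : ℚ) (c : ℕ) (h : q.den ∣ c) : ∃ z : ℤ, (q : ℝ) * c = z := by
  obtain ⟨e, he⟩ := h
  refine ⟨q.num * e, ?_⟩
  have hq : (q : ℝ) = q.num / q.den := by exact_mod_cast (Rat.num_div_den q).symm
  have hden : (q.den : ℝ) ≠ 0 := Nat.cast_ne_zero.mpr q.den_nz
  subst he
  rw [hq]
  push_cast
  field_simp

/-- Theorem 1 (multi-beam forming / grating lobes): if all `â_k` and `b̂_k` are rational,
then there exists a uniform antenna spacing `d ≥ D_min` such that, with positions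
`x_n = (n-1)d`, the beam gain
`(1/N) |∑_{n=1}^N exp(i 2π((n-1) â_k d + (n-1)² (b̂_k d)²))|²` equals the full gain `N`
simultaneously for every `k = 1,…,K`. -/
theorem multi_beam_full_gain
    (lam Dmin : ℝ) (hlam : 0 < lam) (hDmin : 0 < Dmin)
    (N K : ℕ) (hN : 1 ≤ N) (hK : 1 ≤ K)
    (ahat bhat : Fin K → ℚ) :
    ∃ d : ℝ, Dmin ≤ d ∧
      ∀ k : Fin K,
        (1 / (N : ℝ)) *
            ‖∑ n ∈ Finset.range N,
              Complex.exp (Complex.I *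
                ((2 * Real.pi) *
                  ((n : ℝ) * ((ahat k : ℝ) * d) +
                    (n : ℝ) ^ 2 * ((bhat k : ℝ) * d) ^ 2) : ℝ))‖ ^ 2 =
          (N : ℝ) := by
  classical
  set D : ℕ := ∏ k : Fin K, ((ahat k).den * (bhat k).den) with hD
  have hDpos : 1 ≤ D :=
    Nat.one_le_iff_ne_zero.mpr (Finset.prod_ne_zero_iff.mpr
      (fun k _ => Nat.mul_ne_zero (ahat k).den_nz (bhat k).den_nz))
  set m : ℕ := ⌈Dmin⌉₊ + 1 with hm
  set c : ℕ := m * D with hc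
  refine ⟨(c : ℝ), ?_, ?_⟩
  · have h1 : Dmin ≤ (m : ℝ) := by
      have := Nat.le_ceil Dmin
      push_cast [hm]; linarith
    have h2 : (m : ℝ) ≤ (c : ℝ) := by
      have : m ≤ c := Nat.le_mul_of_pos_right m hDpos
      exact_mod_cast this
    linarith
  · intro k
    have hda : (ahat k).den ∣ c := by
      refine Dvd.dvd.mul_left ?_ m
      exact dvd_trans (Dvd.intro _ rfl) (Finset.dvd_prod_of_mem _ (Finset.mem_univ k))
    have hdb : (bhat k).den ∣ c := by
      refine Dvd.dvd.mul_left ?_ m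
      exact dvd_trans (Dvd.intro_left _ rfl) (Finset.dvd_prod_of_mem _ (Finset.mem_univ k))
    obtain ⟨za, hza⟩ := rat_mul_nat_int (ahat k) c hda
    obtain ⟨zb, hzb⟩ := rat_mul_nat_int (bhat k) c hdb
    have hterm : ∀ n ∈ Finset.range N,
        Complex.exp (Complex.I *
          ((2 * Real.pi) *
            ((n : ℝ) * ((ahat k : ℝ) * (c : ℝ)) +
              (n : ℝ) ^ 2 * ((bhat k : ℝ) * (c : ℝ)) ^ 2) : ℝ)) = 1 := by
      intro n _
      rw [hza, hzb]
      have : (Complex.I *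
          (((2 * Real.pi) *
            ((n : ℝ) * (za : ℝ) + (n : ℝ) ^ 2 * (zb : ℝ) ^ 2) : ℝ) : ℂ)) =
          ((n * za + n ^ 2 * zb ^ 2 : ℤ) : ℂ) * (2 * ↑Real.pi * Complex.I) := by
        push_cast
        ring
      rw [this, Complex.exp_int_mul_two_pi_mul_I]
    rw [Finset.sum_congr rfl hterm, Finset.sum_const, Finset.card_range, nsmul_eq_mul,
      mul_one, Complex.norm_natCast]
    have hNpos : (0 : ℝ) < N := by exact_mod_cast hN
    field_simp
end
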